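/- (Matsumura's lemma) Let C₀ > 0, C₁ ≥ 0, q > 1, s > 1, and let q* = q/(q−1) be the Hölder conjugate of q. Suppose Φ : [2,∞) → ℝ is differentiable and satisfies Φ'(t) ≤ −(C₀/t)|Φ(t)|^q + C₁/t^s for all t ≥ 2. Then Φ(t) ≤ C₂ / (log t)^{q*−1} for all t ≥ 2, where C₂ = (1/log 2)·((log 2)^{q*} Φ(2) + C₁ ∫_2^∞ (log τ)^{q*} τ^{−s} dτ) + (q*/(q C₀))^{q*−1}. -/

import Mathlib

open MeasureTheory


private lemma le_start_of_deriv_nonpos {a : ℝ} {f f' : ℝ → ℝ}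
    (hf : ∀ x ≥ a, HasDerivAt f (f' x) x) (h0 : ∀ x ≥ a, f' x ≤ 0) :
    ∀ t ≥ a, f t ≤ f a := by
  have hA : AntitoneOn f (Set.Ici a) := by
    apply antitoneOn_of_deriv_nonpos (convex_Ici a)
    · intro x hx; exact (hf x hx).continuousAt.continuousWithinAt
    · intro x hx
      rw [interior_Ici] at hx
      exact ((hf x hx.le).differentiableAt).differentiableWithinAt
    · intro x hx
      rw [interior_Ici] at hx
      rw [(hf x hx.le).deriv]; exact h0 x hx.le
  intro t ht
  exact hA Set.self_mem_Ici ht ht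

private lemma start_le_of_deriv_nonneg {a : ℝ} {f f' : ℝ → ℝ}
    (hf : ∀ x ≥ a, HasDerivAt f (f' x) x) (h0 : ∀ x ≥ a, 0 ≤ f' x) :
    ∀ t ≥ a, f a ≤ f t := by
  have hA : MonotoneOn f (Set.Ici a) := by
    apply monotoneOn_of_deriv_nonneg (convex_Ici a)
    · intro x hx; exact (hf x hx).continuousAt.continuousWithinAt
    · intro x hx
      rw [interior_Ici] at hx
      exact ((hf x hx.le).differentiableAt).differentiableWithinAt
    · intro x hx
      rw [interior_Ici] at hx
      rw [(hf x hx.le).deriv]; exact h0 x hx.le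
  intro t ht
  exact hA Set.self_mem_Ici ht ht

private lemma young_aux {C₀ q : ℝ} (hC₀ : 0 < C₀) (hq : 1 < q) (x L : ℝ) (hL : 0 < L) :
    (q/(q-1)) * x - C₀ * L * |x| ^ q ≤
      ((q/(q-1))/(q*C₀)) ^ ((q/(q-1)) - 1) * L ^ (1 - q/(q-1)) := by
  set p := q / (q - 1) with hp_def
  have hcon : q.HolderConjugate p := Real.HolderConjugate.conjExponent hq
  have hq0 : (0:ℝ) < q := hcon.pos
  have hp0 : (0:ℝ) < p := hcon.symm.pos
  have hqc : (0:ℝ) < q * C₀ * L := by positivity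
  set c : ℝ := (q * C₀ * L) ^ (q⁻¹) with hc_def
  have hc : 0 < c := Real.rpow_pos_of_pos hqc _
  have key := Real.young_inequality_of_nonneg
    (mul_nonneg hc.le (abs_nonneg x)) (by positivity : (0:ℝ) ≤ p * c⁻¹) hcon
  have hcq : c ^ q = q * C₀ * L := by
    rw [hc_def, ← Real.rpow_mul hqc.le, inv_mul_cancel₀ hq0.ne', Real.rpow_one]
  have hpq : p / q = p - 1 := hcon.symm.div_conj_eq_sub_one
  have keq : c * |x| * (p * c⁻¹) = p * |x| := by
    field_simp
  have k1 : (c * |x|) ^ q / q = C₀ * L * |x| ^ q := by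
    rw [Real.mul_rpow hc.le (abs_nonneg x), hcq]
    field_simp
  have k2 : (p * c⁻¹) ^ p / p = (p/(q*C₀)) ^ (p - 1) * L ^ (1 - p) := by
    have h2 : (p * c⁻¹) ^ p = p ^ p * (q * C₀ * L) ^ (-(p-1)) := by
      rw [Real.mul_rpow hp0.le (by positivity), hc_def, ← Real.rpow_neg_one,
        ← Real.rpow_mul hqc.le, ← Real.rpow_mul hqc.le]
      congr 1
      rw [show q⁻¹ * (-1) * p = -(p/q) by ring, hpq]
    rw [h2]
    have h3 : (q * C₀ * L) ^ (-(p-1)) = (q*C₀) ^ (-(p-1)) * L ^ (-(p-1)) :=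
      Real.mul_rpow (by positivity) hL.le
    have h4 : p ^ p / p = p ^ (p-1) := by
      rw [Real.rpow_sub hp0, Real.rpow_one]
    have h5 : (p/(q*C₀)) ^ (p-1) = p ^ (p-1) * (q*C₀) ^ (-(p-1)) := by
      rw [Real.div_rpow hp0.le (by positivity), Real.rpow_neg (by positivity), div_eq_mul_inv]
    have h6 : L ^ (1-p) = L ^ (-(p-1)) := by norm_num
    rw [h3, h5, h6, ← h4]
    ring
  have hxa : p * x ≤ p * |x| := mul_le_mul_of_nonneg_left (le_abs_self x) hp0.le
  rw [keq] at key
  rw [k1, k2] at key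
  linarith

private lemma start_le_of_deriv_nonneg' {a : ℝ} {f f' : ℝ → ℝ}
    (hf : ∀ x ≥ a, HasDerivAt f (f' x) x) (h0 : ∀ x ≥ a, 0 ≤ f' x) :
    ∀ t ≥ a, f a ≤ f t := by
  have hA : MonotoneOn f (Set.Ici a) := by
    apply monotoneOn_of_deriv_nonneg (convex_Ici a)
    · intro x hx; exact (hf x hx).continuousAt.continuousWithinAt
    · intro x hx
      rw [interior_Ici] at hx
      exact ((hf x hx.le).differentiableAt).differentiableWithinAt
    · intro x hx
      rw [interior_Ici] at hx
      rw [(hf x hx.le).deriv]; exact h0 x hx.le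
  intro t ht
  exact hA Set.self_mem_Ici ht ht

private lemma le_start_of_deriv_nonpos' {a : ℝ} {f f' : ℝ → ℝ}
    (hf : ∀ x ≥ a, HasDerivAt f (f' x) x) (h0 : ∀ x ≥ a, f' x ≤ 0) :
    ∀ t ≥ a, f t ≤ f a := by
  have hA : AntitoneOn f (Set.Ici a) := by
    apply antitoneOn_of_deriv_nonpos (convex_Ici a)
    · intro x hx; exact (hf x hx).continuousAt.continuousWithinAt
    · intro x hx
      rw [interior_Ici] at hx
      exact ((hf x hx.le).differentiableAt).differentiableWithinAt
    · intro x hx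
      rw [interior_Ici] at hx
      rw [(hf x hx.le).deriv]; exact h0 x hx.le
  intro t ht
  exact hA Set.self_mem_Ici ht ht

private lemma phi2_lower {C₀ C₁ q s : ℝ} (hC₀ : 0 < C₀) (hC₁ : 0 ≤ C₁)
    (hq : 1 < q) (hs : 1 < s) (Φ Φ' : ℝ → ℝ)
    (hderiv : ∀ t ≥ (2:ℝ), HasDerivAt Φ (Φ' t) t)
    (hineq : ∀ t ≥ (2:ℝ), Φ' t ≤ -(C₀ / t) * |Φ t| ^ q + C₁ / t ^ s) :
    -(C₁ * (2:ℝ)^(1-s) / (s-1)) ≤ Φ 2 := by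
  by_contra hcontra
  push_neg at hcontra
  set m := C₁ * (2:ℝ)^(1-s) / (s-1) with hm_def
  have hs1 : (0:ℝ) < s - 1 := by linarith
  have hm0 : 0 ≤ m := by positivity
  set δ := -Φ 2 - m with hδ_def
  have hδ0 : 0 < δ := by simp only [hδ_def]; linarith
  have hq0 : (0:ℝ) < q := by linarith
  -- derivative of t ^ (1-s)
  have hpow : ∀ x : ℝ, x ≥ 2 → HasDerivAt (fun t : ℝ => t ^ (1-s)) ((1-s) * x^(-s)) x := by
    intro x hx
    have hx0 : (0:ℝ) < x := by linarith
    have h := Real.hasDerivAt_rpow_const (x := x) (p := 1-s) (Or.inl hx0.ne')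
    rwa [show (1:ℝ)-s-1 = -s by ring] at h
  -- G is monotone
  set G := fun t : ℝ => -Φ t - C₁ * (t ^ (1-s) / (s-1)) with hG_def
  have hG : ∀ x ≥ (2:ℝ), HasDerivAt G (-Φ' x - C₁ * ((1-s) * x^(-s) / (s-1))) x := by
    intro x hx
    exact ((hderiv x hx).neg).sub (((hpow x hx).div_const (s-1)).const_mul C₁)
  have hG0 : ∀ x ≥ (2:ℝ), 0 ≤ -Φ' x - C₁ * ((1-s) * x^(-s) / (s-1)) := by
    intro x hx
    have hx0 : (0:ℝ) < x := by linarith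
    have h1 := hineq x hx
    have h2 : C₁ * ((1-s) * x^(-s) / (s-1)) = -(C₁ * (x^s)⁻¹) := by
      rw [Real.rpow_neg hx0.le]
      field_simp
      ring
    have h3 : (0:ℝ) ≤ (C₀ / x) * |Φ x| ^ q := by positivity
    have h4 : C₁ / x ^ s = C₁ * (x ^ s)⁻¹ := by ring
    rw [h2]
    linarith [h1, h3]
  have hGmono := start_le_of_deriv_nonneg' hG hG0
  have hu : ∀ t ≥ (2:ℝ), δ ≤ -Φ t := by
    intro t ht
    have h1 := hGmono t ht
    have ht0 : (0:ℝ) < t := by linarith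
    have h2 : 0 ≤ C₁ * (t ^ (1-s) / (s-1)) := by positivity
    have h3 : δ = -Φ 2 - C₁ * (2 ^ (1-s) / (s-1)) := by
      rw [hδ_def, hm_def]; ring
    simp only [hG_def] at h1
    rw [h3]
    linarith
  have hupos : ∀ t ≥ (2:ℝ), 0 < -Φ t := fun t ht => lt_of_lt_of_le hδ0 (hu t ht)
  -- v = u^(1-q)
  set v := fun t : ℝ => (-Φ t) ^ (1-q) with hv_def
  have hv : ∀ x ≥ (2:ℝ), HasDerivAt v ((1-q) * (-Φ x)^(-q) * (-Φ' x)) x := by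
    intro x hx
    have h1 : HasDerivAt (fun y : ℝ => y ^ (1-q)) ((1-q) * (-Φ x)^(-q)) (-Φ x) := by
      have h := Real.hasDerivAt_rpow_const (x := -Φ x) (p := 1-q) (Or.inl (hupos x hx).ne')
      rwa [show (1:ℝ)-q-1 = -q by ring] at h
    exact h1.comp x ((hderiv x hx).neg)
  -- H and its derivative
  set H := fun t : ℝ => v t + (q-1) * C₀ * Real.log t
      + (q-1) * C₁ * δ^(-q) * (t ^ (1-s) / (s-1)) with hH_def
  have hH : ∀ x ≥ (2:ℝ), HasDerivAt H
      ((1-q) * (-Φ x)^(-q) * (-Φ' x) + (q-1) * C₀ * x⁻¹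
        + (q-1) * C₁ * δ^(-q) * ((1-s) * x^(-s) / (s-1))) x := by
    intro x hx
    have hx0 : (0:ℝ) < x := by linarith
    exact ((hv x hx).add ((Real.hasDerivAt_log hx0.ne').const_mul ((q-1) * C₀))).add
      (((hpow x hx).div_const (s-1)).const_mul ((q-1) * C₁ * δ^(-q)))
  have hH0 : ∀ x ≥ (2:ℝ), (1-q) * (-Φ x)^(-q) * (-Φ' x) + (q-1) * C₀ * x⁻¹
        + (q-1) * C₁ * δ^(-q) * ((1-s) * x^(-s) / (s-1)) ≤ 0 := by
    intro x hx
    have hx0 : (0:ℝ) < x := by linarith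
    have hux : 0 < -Φ x := hupos x hx
    have habs : |Φ x| = -Φ x := abs_of_neg (by linarith)
    have hstep : (C₀/x) * (-Φ x)^q - C₁/x^s ≤ -Φ' x := by
      have h1 := hineq x hx
      rw [habs] at h1
      linarith
    have hUpos : 0 < (-Φ x)^(-q) := Real.rpow_pos_of_pos hux _
    have hc : (1-q) * (-Φ x)^(-q) ≤ 0 := by nlinarith
    have hmul := mul_le_mul_of_nonpos_left hstep hc
    have hUW : (-Φ x)^(-q) * (-Φ x)^q = 1 := by
      rw [← Real.rpow_add hux]
      norm_num
    have hU : (-Φ x)^(-q) ≤ δ^(-q) :=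
      Real.rpow_le_rpow_of_nonpos hδ0 (hu x hx) (by linarith)
    have hxs : x^(-s) = (x^s)⁻¹ := Real.rpow_neg hx0.le s
    have hxspos : 0 < x^s := Real.rpow_pos_of_pos hx0 _
    calc (1-q) * (-Φ x)^(-q) * (-Φ' x) + (q-1) * C₀ * x⁻¹
        + (q-1) * C₁ * δ^(-q) * ((1-s) * x^(-s) / (s-1))
        ≤ (1-q) * (-Φ x)^(-q) * ((C₀/x) * (-Φ x)^q - C₁/x^s) + (q-1) * C₀ * x⁻¹
          - (q-1) * C₁ * δ^(-q) * x^(-s) := by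
          have heq : (q-1) * C₁ * δ^(-q) * ((1-s) * x^(-s) / (s-1))
              = -((q-1) * C₁ * δ^(-q) * x^(-s)) := by
            field_simp
            ring
          rw [heq]
          linarith [hmul]
      _ = (q-1) * C₁ * (x^s)⁻¹ * ((-Φ x)^(-q) - δ^(-q))
          + (1-q) * C₀ * x⁻¹ * ((-Φ x)^(-q) * (-Φ x)^q) + (q-1) * C₀ * x⁻¹ := by
          rw [hxs]
          ring
      _ ≤ 0 := by
          rw [hUW]
          have h5 : (q-1) * C₁ * (x^s)⁻¹ * ((-Φ x)^(-q) - δ^(-q)) ≤ 0 := by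
            apply mul_nonpos_of_nonneg_of_nonpos
            · have hq1' : (0:ℝ) ≤ q - 1 := by linarith
              positivity
            · linarith
          nlinarith
  have hHanti := le_start_of_deriv_nonpos' hH hH0
  -- contradiction at large time
  set T := max 2 (Real.exp (H 2 / ((q-1) * C₀))) with hT_def
  have hT2 : (2:ℝ) ≤ T := le_max_left _ _
  have hT0 : (0:ℝ) < T := by linarith
  have hlogT : H 2 / ((q-1) * C₀) ≤ Real.log T := by
    rw [Real.le_log_iff_exp_le hT0]
    exact le_max_right _ _
  have hq1 : (0:ℝ) < (q-1) * C₀ := by nlinarith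
  have hH2 : H 2 ≤ (q-1) * C₀ * Real.log T := by
    rw [div_le_iff₀ hq1] at hlogT
    linarith [hlogT]
  have hvT : 0 < v T := Real.rpow_pos_of_pos (hupos T hT2) _
  have hnn : 0 ≤ (q-1) * C₁ * δ^(-q) * (T ^ (1-s) / (s-1)) :=
    mul_nonneg (mul_nonneg (mul_nonneg (by linarith) hC₁) (Real.rpow_nonneg hδ0.le _))
      (by positivity)
  have hfin := hHanti T hT2
  simp only [hH_def] at hfin hH2
  linarith

private lemma cont_aux {p s : ℝ} :
    ContinuousOn (fun τ : ℝ => (Real.log τ) ^ p / τ ^ s) (Set.Ioi 1) := by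
  apply ContinuousOn.div
  · apply ContinuousOn.rpow_const
    · exact Real.continuousOn_log.mono (fun x hx => by
        simp only [Set.mem_compl_iff, Set.mem_singleton_iff]
        exact ne_of_gt (lt_trans one_pos hx))
    · intro x hx
      exact Or.inl (ne_of_gt (Real.log_pos hx))
  · exact continuousOn_id.rpow_const (fun x hx => Or.inl (ne_of_gt (lt_trans one_pos hx)))
  · intro x hx
    exact ne_of_gt (Real.rpow_pos_of_pos (lt_trans one_pos hx) _)

private lemma integrable_aux {p s : ℝ} (hp : 0 < p) (hs : 1 < s) :
    IntegrableOn (fun τ : ℝ => (Real.log τ) ^ p / τ ^ s) (Set.Ioi 2) := by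
  set ε := (s-1)/(2*p) with hε_def
  have hε : 0 < ε := div_pos (by linarith) (by positivity)
  have hexp : (s-1)/2 - s < -1 := by linarith
  have hg : IntegrableOn (fun τ : ℝ => ε^(-p) * τ ^ ((s-1)/2 - s)) (Set.Ioi 2) :=
    (integrableOn_Ioi_rpow_of_lt hexp two_pos).const_mul _
  have hmeas : AEStronglyMeasurable (fun τ : ℝ => (Real.log τ) ^ p / τ ^ s)
      (volume.restrict (Set.Ioi 2)) := by
    apply ContinuousOn.aestronglyMeasurable _ measurableSet_Ioi
    exact cont_aux.mono (fun x hx => Set.mem_Ioi.mpr (lt_trans one_lt_two (Set.mem_Ioi.mp hx)))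
  apply Integrable.mono hg hmeas
  rw [ae_restrict_iff' measurableSet_Ioi]
  apply Filter.Eventually.of_forall
  intro τ hτ
  have hτ2 : (2:ℝ) < τ := hτ
  have hτ0 : (0:ℝ) < τ := by linarith
  have hτ1 : (1:ℝ) < τ := by linarith
  have hlog : 0 < Real.log τ := Real.log_pos hτ1
  have hτs : 0 < τ ^ s := Real.rpow_pos_of_pos hτ0 _
  have hfnn : 0 ≤ (Real.log τ) ^ p / τ ^ s :=
    div_nonneg (Real.rpow_nonneg hlog.le _) hτs.le
  have hgnn : 0 ≤ ε^(-p) * τ ^ ((s-1)/2 - s) :=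
    mul_nonneg (Real.rpow_nonneg hε.le _) (Real.rpow_nonneg hτ0.le _)
  rw [Real.norm_eq_abs, Real.norm_eq_abs, abs_of_nonneg hfnn, abs_of_nonneg hgnn]
  have h1 : Real.log τ ≤ τ^ε/ε := Real.log_le_rpow_div hτ0.le hε
  have h2 : (Real.log τ) ^ p ≤ (τ^ε/ε) ^ p := Real.rpow_le_rpow hlog.le h1 hp.le
  have h3 : (τ^ε/ε) ^ p = τ^((s-1)/2) / ε^p := by
    rw [Real.div_rpow (Real.rpow_nonneg hτ0.le _) hε.le, ← Real.rpow_mul hτ0.le]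
    congr 2
    rw [hε_def]
    field_simp
  calc (Real.log τ) ^ p / τ ^ s ≤ (τ^((s-1)/2) / ε^p) / τ ^ s := by
        rw [← h3]
        gcongr
    _ = ε^(-p) * τ ^ ((s-1)/2 - s) := by
        rw [Real.rpow_sub hτ0, Real.rpow_neg hε.le]
        ring

/-- Matsumura's lemma: if Φ'(t) ≤ -(C₀/t)|Φ(t)|^q + C₁/t^s for t ≥ 2, with
C₀ > 0, C₁ ≥ 0, q > 1, s > 1, then Φ(t) ≤ C₂ / (log t)^(q*-1) for t ≥ 2, where
q* = q/(q-1) and C₂ is the explicit constant below. -/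
theorem stmt_6 (C₀ C₁ q s : ℝ) (hC₀ : 0 < C₀) (hC₁ : 0 ≤ C₁)
    (hq : 1 < q) (hs : 1 < s) (Φ Φ' : ℝ → ℝ)
    (hderiv : ∀ t ≥ (2:ℝ), HasDerivAt Φ (Φ' t) t)
    (hineq : ∀ t ≥ (2:ℝ), Φ' t ≤ -(C₀ / t) * |Φ t| ^ q + C₁ / t ^ s) :
    ∀ t ≥ (2:ℝ), Φ t ≤
      ((1 / Real.log 2) * ((Real.log 2) ^ (q / (q - 1)) * Φ 2 +
          C₁ * ∫ τ in Set.Ioi (2:ℝ), (Real.log τ) ^ (q / (q - 1)) / τ ^ s) +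
        ((q / (q - 1)) / (q * C₀)) ^ (q / (q - 1) - 1)) /
      (Real.log t) ^ (q / (q - 1) - 1) := by
  intro t ht
  have hl : 0 < Real.log 2 := Real.log_pos one_lt_two
  set p := q / (q - 1) with hp_def
  have hcon : q.HolderConjugate p := Real.HolderConjugate.conjExponent hq
  have hp1 : 1 < p := (Real.holderConjugate_iff.mp hcon.symm).1
  have hp0 : (0:ℝ) < p := by linarith
  have hs1 : (0:ℝ) < s - 1 := by linarith
  set A := (p / (q * C₀)) ^ (p - 1) with hA_def
  have hA0 : 0 ≤ A := Real.rpow_nonneg (by positivity) _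
  set f := fun τ : ℝ => (Real.log τ) ^ p / τ ^ s with hf_def
  have hInt : IntegrableOn f (Set.Ioi 2) := integrable_aux hp0 hs
  set I := ∫ τ in Set.Ioi (2:ℝ), f τ with hI_def
  -- step 1 & 2 : nonnegativity of B
  have hΦ2 := phi2_lower hC₀ hC₁ hq hs Φ Φ' hderiv hineq
  have hfnn : ∀ τ : ℝ, τ ∈ Set.Ioi (2:ℝ) → 0 ≤ f τ := by
    intro τ hτ
    have hτ2 : (2:ℝ) < τ := hτ
    exact div_nonneg (Real.rpow_nonneg (Real.log_nonneg (by linarith)) _)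
      (Real.rpow_nonneg (by linarith) _)
  have hIlow : (Real.log 2) ^ p * ((2:ℝ) ^ (1-s) / (s-1)) ≤ I := by
    have hgi : IntegrableOn (fun τ : ℝ => (Real.log 2) ^ p * τ ^ (-s)) (Set.Ioi 2) :=
      (integrableOn_Ioi_rpow_of_lt (by linarith : -s < -1) two_pos).const_mul _
    have hmono : ∫ τ in Set.Ioi (2:ℝ), (Real.log 2) ^ p * τ ^ (-s) ≤ I := by
      rw [hI_def]
      apply setIntegral_mono_on hgi hInt measurableSet_Ioi
      intro τ hτ
      have hτ2 : (2:ℝ) < τ := hτ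
      have hτ0 : (0:ℝ) < τ := by linarith
      have h1 : (Real.log 2) ^ p ≤ (Real.log τ) ^ p :=
        Real.rpow_le_rpow hl.le (Real.log_le_log two_pos (by linarith)) hp0.le
      rw [hf_def]
      simp only
      rw [Real.rpow_neg hτ0.le, div_eq_mul_inv]
      exact mul_le_mul_of_nonneg_right h1 (inv_nonneg.2 (Real.rpow_nonneg hτ0.le _))
    have hval : ∫ τ in Set.Ioi (2:ℝ), (Real.log 2) ^ p * τ ^ (-s)
        = (Real.log 2) ^ p * ((2:ℝ) ^ (1-s) / (s-1)) := by
      rw [MeasureTheory.integral_const_mul, integral_Ioi_rpow_of_lt (by linarith : -s < -1) two_pos]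
      congr 1
      rw [show -s + 1 = 1 - s by ring]
      have hne : s - 1 ≠ 0 := by linarith
      have hne2 : (1:ℝ) - s ≠ 0 := by linarith
      field_simp
      ring
    linarith [hmono, hval.symm.le, hval.le]
  have hB : 0 ≤ (Real.log 2) ^ p * Φ 2 + C₁ * I := by
    have h1 : C₁ * ((Real.log 2) ^ p * ((2:ℝ) ^ (1-s) / (s-1))) ≤ C₁ * I :=
      mul_le_mul_of_nonneg_left hIlow hC₁
    have h2 : (Real.log 2) ^ p * (-(C₁ * (2:ℝ) ^ (1-s) / (s-1))) ≤ (Real.log 2) ^ p * Φ 2 :=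
      mul_le_mul_of_nonneg_left hΦ2 (Real.rpow_nonneg hl.le _)
    have hz : Real.log 2 ^ p * -(C₁ * (2:ℝ) ^ (1-s) / (s-1))
        + C₁ * (Real.log 2 ^ p * ((2:ℝ) ^ (1-s) / (s-1))) = 0 := by ring
    linarith [h1, h2, hz]
  -- step 3 : the weighted Gronwall argument
  set J := fun u : ℝ => ∫ τ in (2:ℝ)..u, f τ with hJ_def
  have hJder : ∀ x ≥ (2:ℝ), HasDerivAt J (f x) x := by
    intro x hx
    apply intervalIntegral.integral_hasDerivAt_right
    · apply ContinuousOn.intervalIntegrable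
      apply (cont_aux (p := p) (s := s)).mono
      intro y hy
      rw [Set.uIcc_of_le (by linarith : (2:ℝ) ≤ x)] at hy
      exact lt_of_lt_of_le one_lt_two hy.1
    · exact ContinuousOn.stronglyMeasurableAtFilter isOpen_Ioi cont_aux x
        (by simp only [Set.mem_Ioi]; linarith)
    · exact cont_aux.continuousAt (isOpen_Ioi.mem_nhds (by simp only [Set.mem_Ioi]; linarith))
  have hJle : ∀ u ≥ (2:ℝ), J u ≤ I := by
    intro u hu
    rw [hJ_def]
    simp only
    rw [intervalIntegral.integral_of_le hu, hI_def]
    apply setIntegral_mono_set hInt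
    · rw [Filter.EventuallyLE, ae_restrict_iff' measurableSet_Ioi]
      exact Filter.Eventually.of_forall (fun τ hτ => hfnn τ hτ)
    · exact (Set.Ioc_subset_Ioi_self).eventuallyLE
  set F := fun u : ℝ => (Real.log u) ^ p * Φ u with hF_def
  have hFder : ∀ x ≥ (2:ℝ), HasDerivAt F
      (p * (Real.log x) ^ (p-1) * x⁻¹ * Φ x + (Real.log x) ^ p * Φ' x) x := by
    intro x hx
    have hx0 : (0:ℝ) < x := by linarith
    have hlx : 0 < Real.log x := Real.log_pos (by linarith)
    have h1 : HasDerivAt (fun u : ℝ => (Real.log u) ^ p)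
        (p * (Real.log x) ^ (p-1) * x⁻¹) x := by
      have h2 : HasDerivAt (fun y : ℝ => y ^ p) (p * (Real.log x) ^ (p-1)) (Real.log x) :=
        Real.hasDerivAt_rpow_const (Or.inl hlx.ne')
      exact h2.comp x (Real.hasDerivAt_log hx0.ne')
    exact h1.mul (hderiv x hx)
  set M := fun u : ℝ => F u - A * Real.log u - C₁ * J u with hM_def
  have hMder : ∀ x ≥ (2:ℝ), HasDerivAt M
      (p * (Real.log x) ^ (p-1) * x⁻¹ * Φ x + (Real.log x) ^ p * Φ' x
        - A * x⁻¹ - C₁ * f x) x := by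
    intro x hx
    have hx0 : (0:ℝ) < x := by linarith
    exact ((hFder x hx).sub ((Real.hasDerivAt_log hx0.ne').const_mul A)).sub
      ((hJder x hx).const_mul C₁)
  have hM0 : ∀ x ≥ (2:ℝ), p * (Real.log x) ^ (p-1) * x⁻¹ * Φ x + (Real.log x) ^ p * Φ' x
      - A * x⁻¹ - C₁ * f x ≤ 0 := by
    intro x hx
    have hx0 : (0:ℝ) < x := by linarith
    have hlx : 0 < Real.log x := Real.log_pos (by linarith)
    have hyoung := young_aux hC₀ hq (Φ x) (Real.log x) hlx
    rw [← hp_def, ← hA_def] at hyoung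
    have hLp : (Real.log x) ^ p = (Real.log x) ^ (p-1) * Real.log x := by
      have := Real.rpow_add_one hlx.ne' (p-1)
      rwa [show p - 1 + 1 = p by ring] at this
    have key2 : p * (Real.log x) ^ (p-1) * Φ x - C₀ * (Real.log x) ^ p * |Φ x| ^ q ≤ A := by
      have hmul := mul_le_mul_of_nonneg_left hyoung
        (Real.rpow_nonneg hlx.le (p-1))
      have hone : (Real.log x) ^ (p-1) * (Real.log x) ^ (1-p) = 1 := by
        rw [← Real.rpow_add hlx]
        norm_num
      calc p * (Real.log x) ^ (p-1) * Φ x - C₀ * (Real.log x) ^ p * |Φ x| ^ q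
          = (Real.log x) ^ (p-1) * (p * Φ x - C₀ * Real.log x * |Φ x| ^ q) := by
            rw [hLp]; ring
        _ ≤ (Real.log x) ^ (p-1) * (A * (Real.log x) ^ (1-p)) := hmul
        _ = A * ((Real.log x) ^ (p-1) * (Real.log x) ^ (1-p)) := by ring
        _ = A := by rw [hone, mul_one]
    have h3 := mul_le_mul_of_nonneg_left (hineq x hx) (Real.rpow_nonneg hlx.le p)
    calc p * (Real.log x) ^ (p-1) * x⁻¹ * Φ x + (Real.log x) ^ p * Φ' x - A * x⁻¹ - C₁ * f x
        ≤ p * (Real.log x) ^ (p-1) * x⁻¹ * Φ x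
          + (Real.log x) ^ p * (-(C₀ / x) * |Φ x| ^ q + C₁ / x ^ s)
          - A * x⁻¹ - C₁ * ((Real.log x) ^ p / x ^ s) := by
          rw [hf_def]
          simp only
          linarith [h3]
      _ = x⁻¹ * (p * (Real.log x) ^ (p-1) * Φ x - C₀ * (Real.log x) ^ p * |Φ x| ^ q - A) := by
          ring
      _ ≤ 0 := mul_nonpos_of_nonneg_of_nonpos (by positivity) (by linarith [key2])
  have hMle := le_start_of_deriv_nonpos' hMder hM0
  -- conclusion
  have hlL : Real.log 2 ≤ Real.log t := Real.log_le_log two_pos ht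
  have hLpos : 0 < Real.log t := lt_of_lt_of_le hl hlL
  have h1 := hMle t ht
  simp only [hM_def, hF_def] at h1
  have hJ2 : J 2 = 0 := intervalIntegral.integral_same
  rw [hJ2] at h1
  have hJt : C₁ * J t ≤ C₁ * I := mul_le_mul_of_nonneg_left (hJle t ht) hC₁
  set B := (Real.log 2) ^ p * Φ 2 + C₁ * I with hB_def
  have h4 : (Real.log t) ^ p * Φ t ≤ B + A * (Real.log t - Real.log 2) := by
    rw [hB_def]; linarith [h1, hJt]
  have hkey : B + A * (Real.log t - Real.log 2) ≤ (B / Real.log 2 + A) * Real.log t := by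
    have h5 : B ≤ B * Real.log t / Real.log 2 := by
      rw [le_div_iff₀ hl]
      nlinarith [mul_le_mul_of_nonneg_left hlL hB]
    have h6 : 0 ≤ A * Real.log 2 := mul_nonneg hA0 hl.le
    have h7 : (B / Real.log 2 + A) * Real.log t = B * Real.log t / Real.log 2 + A * Real.log t := by
      ring
    linarith [h5, h6, h7.symm.le, h7.le]
  have hLp : (Real.log t) ^ p = (Real.log t) ^ (p-1) * Real.log t := by
    have := Real.rpow_add_one hLpos.ne' (p-1)
    rwa [show p - 1 + 1 = p by ring] at this
  have h8 : (Real.log t) ^ (p-1) * Φ t ≤ B / Real.log 2 + A := by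
    have h9 : ((Real.log t) ^ (p-1) * Φ t) * Real.log t ≤ (B / Real.log 2 + A) * Real.log t := by
      calc ((Real.log t) ^ (p-1) * Φ t) * Real.log t = (Real.log t) ^ p * Φ t := by
            rw [hLp]; ring
        _ ≤ B + A * (Real.log t - Real.log 2) := h4
        _ ≤ (B / Real.log 2 + A) * Real.log t := hkey
    exact le_of_mul_le_mul_right h9 hLpos
  have hpow : 0 < (Real.log t) ^ (p-1) := Real.rpow_pos_of_pos hLpos _
  rw [le_div_iff₀ hpow]
  calc Φ t * (Real.log t) ^ (p-1) = (Real.log t) ^ (p-1) * Φ t := by ring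
    _ ≤ B / Real.log 2 + A := h8
    _ = 1 / Real.log 2 * B + A := by ring
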